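/- For every reflected maxmin copula C and all x,y ∈ [0,1] one has |C(x,y) − C(y,x)| ≤ 3 − 2√2, and this bound is sharp over the class of reflected maxmin copulas. Moreover, for every (x,y) ∈ [0,1]² with x ≤ y, the supremum of the set {|C(x,y) − C(y,x)| : C a reflected maxmin copula} equals (x/y)(y−x) if y(1−y) ≤ x ≤ min{y, 1−y}; equals ((1−y)/y)(y−x) if 1−y ≤ x ≤ y; and equals xy if x ≤ y(1−y). For x ≥ y the supremum equals the value at (y,x). -/

import Mathlib

/-- The class `𝓕` of generators: `f : [0,1] → [0,1]`, `f(0) = f(1) = 0`,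
`x ↦ f(x) + x` nondecreasing on `[0,1]`, and `x ↦ f(x)/x` nonincreasing on `(0,1]`. -/
def MemF (f : ℝ → ℝ) : Prop :=
  (∀ x ∈ Set.Icc (0:ℝ) 1, f x ∈ Set.Icc (0:ℝ) 1) ∧
  f 0 = 0 ∧ f 1 = 0 ∧
  MonotoneOn (fun x => f x + x) (Set.Icc 0 1) ∧
  AntitoneOn (fun x => f x / x) (Set.Ioc 0 1)

/-- A reflected maxmin (RMM) copula: `C(x,y) = max{0, xy − f(x)g(y)}` on `[0,1]²`
with `f, g ∈ 𝓕`. -/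
def IsRMMCopula (C : ℝ → ℝ → ℝ) : Prop :=
  ∃ f g : ℝ → ℝ, MemF f ∧ MemF g ∧
    ∀ x ∈ Set.Icc (0:ℝ) 1, ∀ y ∈ Set.Icc (0:ℝ) 1,
      C x y = max 0 (x * y - f x * g y)

/-- The maximal asymmetry function of the family of RMM copulas (for `x ≤ y`). -/
noncomputable def dstarRMM (x y : ℝ) : ℝ :=
  if y * (1 - y) ≤ x ∧ x ≤ min y (1 - y) then x / y * (y - x)
  else if 1 - y ≤ x then (1 - y) / y * (y - x)
  else x * y

/-- generator template -/
noncomputable def genF (c K : ℝ) : ℝ → ℝ := fun s => max 0 (min (c * s) (K - s))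

lemma memF_genF {c K : ℝ} (hc : 0 ≤ c) (hK0 : 0 ≤ K) (hK1 : K ≤ 1) : MemF (genF c K) := by
  refine ⟨?_, ?_, ?_, ?_, ?_⟩
  · intro s hs
    constructor
    · exact le_max_left _ _
    · apply max_le (by norm_num)
      have : min (c * s) (K - s) ≤ K - s := min_le_right _ _
      have := hs.1
      linarith
  · simp [genF, min_eq_left hK0]
  · have h1 : min (c * 1) (K - 1) ≤ 0 := le_trans (min_le_right _ _) (by linarith)
    simp only [genF]
    rw [max_eq_left h1]
  · intro a ha b hb hab
    simp only [genF]
    have h1 : max 0 (min (c * a) (K - a)) + a = max a (min (c * a + a) K) := by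
      rw [← max_add_add_right, ← min_add_add_right, zero_add, sub_add_cancel]
    have h2 : max 0 (min (c * b) (K - b)) + b = max b (min (c * b + b) K) := by
      rw [← max_add_add_right, ← min_add_add_right, zero_add, sub_add_cancel]
    rw [h1, h2]
    apply max_le_max hab
    apply min_le_min _ le_rfl
    nlinarith
  · intro a ha b hb hab
    simp only [genF]
    have ha0 : 0 < a := ha.1
    have hb0 : 0 < b := hb.1
    rw [div_le_div_iff₀ hb0 ha0]
    by_cases h1 : min (c * b) (K - b) ≤ 0
    · rw [max_eq_left h1]
      have : (0:ℝ) ≤ max 0 (min (c * a) (K - a)) * b :=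
        mul_nonneg (le_max_left _ _) hb0.le
      linarith
    · push_neg at h1
      rw [max_eq_right h1.le]
      have key : min (c * b) (K - b) * a ≤ min (c * a) (K - a) * b := by
        rcases le_total (c * a) (K - a) with h | h
        · rw [min_eq_left h]
          have : min (c * b) (K - b) ≤ c * b := min_le_left _ _
          nlinarith
        · rw [min_eq_right h]
          have : min (c * b) (K - b) ≤ K - b := min_le_right _ _
          nlinarith
      calc min (c * b) (K - b) * a ≤ min (c * a) (K - a) * b := key
        _ ≤ max 0 (min (c * a) (K - a)) * b :=
          mul_le_mul_of_nonneg_right (le_max_right _ _) hb0.le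

lemma memF_zero : MemF (fun _ => 0) := by
  refine ⟨fun x hx => by norm_num, rfl, rfl, ?_, ?_⟩
  · intro a ha b hb hab; simpa using hab
  · intro a ha b hb hab; simp

lemma dstar_nonneg {x y : ℝ} (hx : 0 ≤ x) (hxy : x ≤ y) (hy : y ≤ 1) :
    0 ≤ dstarRMM x y := by
  unfold dstarRMM
  split_ifs with h1 h2
  · exact mul_nonneg (div_nonneg hx (hx.trans hxy)) (by linarith)
  · exact mul_nonneg (div_nonneg (by linarith) (hx.trans hxy)) (by linarith)
  · exact mul_nonneg hx (hx.trans hxy)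

lemma key_core {x y A B P Q : ℝ} (hx : 0 ≤ x) (hxy : x ≤ y) (hy1 : y ≤ 1)
    (hA0 : 0 ≤ A) (hB0 : 0 ≤ B) (hB1 : B ≤ 1 - y) (hf : x * B ≤ y * A)
    (hP0 : 0 ≤ P) (hP1 : P ≤ 1 - x) (hQ0 : 0 ≤ Q) (hg : P + x ≤ Q + y) :
    x * y - A * Q ≤ dstarRMM x y ∨ B * P - A * Q ≤ dstarRMM x y := by
  have hd0 : 0 ≤ dstarRMM x y := dstar_nonneg hx hxy hy1
  have hAQ0 : 0 ≤ A * Q := mul_nonneg hA0 hQ0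
  rcases eq_or_lt_of_le hx with hx0 | hx0
  · left
    have hxy0 : x * y = 0 := by rw [← hx0]; ring
    linarith
  rcases eq_or_lt_of_le hxy with hxy' | hxy'
  · right
    subst hxy'
    have c1 : x * B * P ≤ x * A * P := mul_le_mul_of_nonneg_right hf hP0
    have c2 : x * A * P ≤ x * A * Q := by
      have := mul_le_mul_of_nonneg_left (show P ≤ Q by linarith) (mul_nonneg hx hA0)
      linarith
    have e : x * (B * P - A * Q) = x * B * P - x * A * Q := by ring
    have main : x * (B * P - A * Q) ≤ x * 0 := by rw [e]; linarith
    have := le_of_mul_le_mul_left main hx0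
    linarith
  have hy0 : 0 < y := lt_trans hx0 hxy'
  have hyx0 : (0:ℝ) ≤ y - x := by linarith
  unfold dstarRMM
  split_ifs with h1 h2
  · -- R1 : y(1-y) ≤ x ∧ x ≤ min y (1-y)
    obtain ⟨h1a, h1b⟩ := h1
    have hx1y : x ≤ 1 - y := le_trans h1b (min_le_right _ _)
    rw [div_mul_eq_mul_div, le_div_iff₀ hy0, le_div_iff₀ hy0]
    by_cases hP : P ≤ y - x
    · right
      have s1 : B * P ≤ (1 - y) * (y - x) := mul_le_mul hB1 hP hP0 (by linarith)
      have s1y := mul_le_mul_of_nonneg_right s1 hy0.le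
      have s2 : 0 ≤ (x - y * (1 - y)) * (y - x) := mul_nonneg (by linarith) hyx0
      have s3 : 0 ≤ A * Q * y := mul_nonneg hAQ0 hy0.le
      linarith [s1y, s2, s3]
    push_neg at hP
    by_cases hAQ : x * (y * y - (y - x)) ≤ y * (A * Q)
    · left; linarith [hAQ]
    push_neg at hAQ
    right
    by_cases hPy : P * (1 - y) ≤ x * y
    · rcases le_total (y * A) (x * (1 - y)) with hA | hA
      · -- 2a : B ≤ yA/x
        have c1 : x * B * (y * P) ≤ y * A * (y * P) :=
          mul_le_mul_of_nonneg_right hf (mul_nonneg hy0.le hP0)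
        have c2 : x * y * A * -Q ≤ x * y * A * (y - x - P) :=
          mul_le_mul_of_nonneg_left (show -Q ≤ y - x - P by linarith)
            (mul_nonneg (mul_nonneg hx hy0.le) hA0)
        have e1 : y * A * (y * P) + x * y * A * (y - x - P) = y * A * ((y - x) * (P + x)) := by
          ring
        have c3 : y * A * ((y - x) * (P + x)) ≤ x * (1 - y) * ((y - x) * (P + x)) :=
          mul_le_mul_of_nonneg_right hA (mul_nonneg hyx0 (by linarith))
        have c4 : x * (1 - y) * ((y - x) * (P + x)) ≤ x * (x * (y - x)) := by
          have hn : 0 ≤ x * (y - x) * (x * y - P * (1 - y)) :=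
            mul_nonneg (mul_nonneg hx hyx0) (by linarith)
          linarith [hn]
        have e0 : x * ((B * P - A * Q) * y) =
            x * B * (y * P) + x * y * A * -Q := by ring
        have main : x * ((B * P - A * Q) * y) ≤ x * (x * (y - x)) := by
          rw [e0]; linarith
        exact le_of_mul_le_mul_left main hx0
      · -- 2b : B ≤ 1-y, A ≥ x(1-y)/y
        have c1 : y * P * B ≤ y * P * (1 - y) :=
          mul_le_mul_of_nonneg_left hB1 (mul_nonneg hy0.le hP0)
        have c2 : y * A * (P - (y - x)) ≤ y * A * Q :=
          mul_le_mul_of_nonneg_left (show P - (y - x) ≤ Q by linarith)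
            (mul_nonneg hy0.le hA0)
        have c3 : x * (1 - y) * (P - (y - x)) ≤ y * A * (P - (y - x)) :=
          mul_le_mul_of_nonneg_right hA (by linarith)
        have e2 : y * P * (1 - y) - x * (1 - y) * (P - (y - x)) =
            (1 - y) * ((y - x) * (P + x)) := by ring
        have c5 : (1 - y) * ((y - x) * (P + x)) ≤ x * (y - x) := by
          have hn : 0 ≤ (x * y - P * (1 - y)) * (y - x) := mul_nonneg (by linarith) hyx0
          linarith [hn]
        have e0 : (B * P - A * Q) * y = y * P * B - y * A * Q := by ring
        rw [e0]; linarith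
    · push_neg at hPy
      have hPx0 : (0:ℝ) < P + x := by linarith
      have h6 : x * (y * y - (y - x)) * (P + x) ≤ x * x * (P - (y - x)) := by
        have hn : 0 ≤ x * y * (P * (1 - y) - x * y) :=
          mul_nonneg (mul_nonneg hx hy0.le) (by linarith)
        linarith [hn]
      have h7 : y * A * (P - (y - x)) ≤ y * (A * Q) := by
        have := mul_le_mul_of_nonneg_left (show P - (y - x) ≤ Q by linarith)
          (mul_nonneg hy0.le hA0)
        linarith [this]
      have h8 : y * A * (P - (y - x)) * (P + x) < x * x * (P - (y - x)) := by
        calc y * A * (P - (y - x)) * (P + x) ≤ y * (A * Q) * (P + x) :=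
              mul_le_mul_of_nonneg_right h7 hPx0.le
          _ < x * (y * y - (y - x)) * (P + x) := mul_lt_mul_of_pos_right hAQ hPx0
          _ ≤ x * x * (P - (y - x)) := h6
      have h9 : y * A * (P + x) ≤ x * x := by
        by_contra hcon
        push_neg at hcon
        have := mul_le_mul_of_nonneg_right hcon.le (show (0:ℝ) ≤ P - (y - x) by linarith)
        linarith [this, h8]
      have c1 : x * B * (y * P) ≤ y * A * (y * P) :=
        mul_le_mul_of_nonneg_right hf (mul_nonneg hy0.le hP0)
      have c2 : x * y * A * -Q ≤ x * y * A * (y - x - P) :=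
        mul_le_mul_of_nonneg_left (show -Q ≤ y - x - P by linarith)
          (mul_nonneg (mul_nonneg hx hy0.le) hA0)
      have e1 : y * A * (y * P) + x * y * A * (y - x - P) = y * A * (P + x) * (y - x) := by
        ring
      have c3 : y * A * (P + x) * (y - x) ≤ x * x * (y - x) :=
        mul_le_mul_of_nonneg_right h9 hyx0
      have e0 : x * ((B * P - A * Q) * y) = x * B * (y * P) + x * y * A * -Q := by ring
      have main : x * ((B * P - A * Q) * y) ≤ x * (x * (y - x)) := by
        rw [e0]; linarith [c1, c2, e1, c3]
      exact le_of_mul_le_mul_left main hx0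
  · -- R2 : 1-y ≤ x
    rw [div_mul_eq_mul_div, le_div_iff₀ hy0, le_div_iff₀ hy0]
    right
    have h1y0 : (0:ℝ) ≤ 1 - y := by linarith
    by_cases hP : P ≤ y - x
    · have s1 : B * P ≤ (1 - y) * (y - x) := mul_le_mul hB1 hP hP0 h1y0
      have s1y := mul_le_mul_of_nonneg_right s1 hy0.le
      have s2 : 0 ≤ (1 - y) * (y - x) * (1 - y) := by positivity
      have s3 : 0 ≤ A * Q * y := mul_nonneg hAQ0 hy0.le
      linarith [s1y, s2, s3]
    push_neg at hP
    rcases le_total (y * A) (x * (1 - y)) with hA | hA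
    · have c1 : x * B * (y * P) ≤ y * A * (y * P) :=
        mul_le_mul_of_nonneg_right hf (mul_nonneg hy0.le hP0)
      have c2 : x * y * A * -Q ≤ x * y * A * (y - x - P) :=
        mul_le_mul_of_nonneg_left (show -Q ≤ y - x - P by linarith)
          (mul_nonneg (mul_nonneg hx hy0.le) hA0)
      have e1 : y * A * (y * P) + x * y * A * (y - x - P) = y * A * ((y - x) * (P + x)) := by
        ring
      have c3 : y * A * ((y - x) * (P + x)) ≤ x * (1 - y) * ((y - x) * (P + x)) :=
        mul_le_mul_of_nonneg_right hA (mul_nonneg hyx0 (by linarith))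
      have c4 : x * (1 - y) * ((y - x) * (P + x)) ≤ x * ((1 - y) * (y - x)) := by
        have hn : 0 ≤ x * ((1 - y) * (y - x)) * (1 - (P + x)) :=
          mul_nonneg (mul_nonneg hx (mul_nonneg h1y0 hyx0)) (by linarith)
        linarith [hn]
      have e0 : x * ((B * P - A * Q) * y) = x * B * (y * P) + x * y * A * -Q := by ring
      have main : x * ((B * P - A * Q) * y) ≤ x * ((1 - y) * (y - x)) := by
        rw [e0]; linarith
      exact le_of_mul_le_mul_left main hx0
    · have c1 : y * P * B ≤ y * P * (1 - y) :=
        mul_le_mul_of_nonneg_left hB1 (mul_nonneg hy0.le hP0)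
      have c2 : y * A * (P - (y - x)) ≤ y * A * Q :=
        mul_le_mul_of_nonneg_left (show P - (y - x) ≤ Q by linarith)
          (mul_nonneg hy0.le hA0)
      have c3 : x * (1 - y) * (P - (y - x)) ≤ y * A * (P - (y - x)) :=
        mul_le_mul_of_nonneg_right hA (by linarith)
      have e2 : y * P * (1 - y) - x * (1 - y) * (P - (y - x)) =
          (1 - y) * ((y - x) * (P + x)) := by ring
      have c5 : (1 - y) * ((y - x) * (P + x)) ≤ (1 - y) * (y - x) := by
        have hn : 0 ≤ (1 - y) * (y - x) * (1 - (P + x)) :=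
          mul_nonneg (mul_nonneg h1y0 hyx0) (by linarith)
        linarith [hn]
      have e0 : (B * P - A * Q) * y = y * P * B - y * A * Q := by ring
      rw [e0]; linarith
  · left
    linarith

lemma rmm_zero : IsRMMCopula (fun u v => max 0 (u * v)) := by
  refine ⟨(fun _ => 0), (fun _ => 0), memF_zero, memF_zero, ?_⟩
  intro x hx y hy
  simp

lemma attain (x y : ℝ) (hx : 0 ≤ x) (hxy : x ≤ y) (hy : y ≤ 1) :
    ∃ C : ℝ → ℝ → ℝ, IsRMMCopula C ∧ |C x y - C y x| = dstarRMM x y := by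
  -- degenerate cases
  rcases eq_or_lt_of_le hx with hx0 | hx0
  · refine ⟨_, rmm_zero, ?_⟩
    subst hx0
    simp only [zero_mul, mul_zero, max_self, sub_self, abs_zero]
    unfold dstarRMM
    split_ifs with h1 h2
    · simp
    · have : y = 1 := by linarith [h2]
      simp [this]
    · simp
  rcases eq_or_lt_of_le hxy with hxy' | hxy'
  · refine ⟨_, rmm_zero, ?_⟩
    subst hxy'
    simp only [sub_self, abs_zero]
    unfold dstarRMM
    split_ifs with h1 h2
    · simp
    · simp
    · exfalso
      push_neg at h2
      have hle : x * (1 - x) ≤ x := by nlinarith [sq_nonneg x]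
      have hmin : x ≤ min x (1 - x) := le_min le_rfl (by linarith)
      exact h1 ⟨hle, hmin⟩
  rcases eq_or_lt_of_le hy with hy1 | hy1
  · subst hy1
    refine ⟨_, rmm_zero, ?_⟩
    have h1 : max 0 (x * 1) = x := by rw [mul_one, max_eq_right hx]
    have h2 : max 0 (1 * x) = x := by rw [one_mul, max_eq_right hx]
    simp only [h1, h2, sub_self, abs_zero]
    unfold dstarRMM
    split_ifs with h1 h2
    · exfalso; simp at h1; linarith [h1.2]
    · norm_num
    · exfalso; simp at h2; linarith
  -- main case : 0 < x < y < 1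
  have hy0 : 0 < y := lt_trans hx0 hxy'
  have h1y : 0 < 1 - y := by linarith
  have hx1 : x < 1 := by linarith
  set P : ℝ := min (1 - x) (x * y / (1 - y)) with hP
  have hP0 : 0 ≤ P := le_min (by linarith) (by positivity)
  have hP1 : P ≤ 1 - x := min_le_left _ _
  set f : ℝ → ℝ := genF ((1 - y) / y) 1 with hfdef
  set g : ℝ → ℝ := genF (P / x) (x + P) with hgdef
  have hfF : MemF f := memF_genF (by positivity) zero_le_one le_rfl
  have hgF : MemF g := memF_genF (by positivity) (by linarith) (by linarith)
  have hfx : f x = x * (1 - y) / y := by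
    simp only [hfdef, genF]
    have e1 : (1 - y) / y * x = x * (1 - y) / y := by ring
    rw [e1, min_eq_left (by rw [div_le_iff₀ hy0]; nlinarith), max_eq_right (by positivity)]
  have hfy : f y = 1 - y := by
    simp only [hfdef, genF]
    have e1 : (1 - y) / y * y = 1 - y := by field_simp
    rw [e1, min_self, max_eq_right (by linarith)]
  have hgx : g x = P := by
    simp only [hgdef, genF]
    have e1 : P / x * x = P := div_mul_cancel₀ _ (ne_of_gt hx0)
    have e2 : x + P - x = P := by ring
    rw [e1, e2, min_self, max_eq_right hP0]
  have hgy : g y = max 0 (P - (y - x)) := by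
    simp only [hgdef, genF]
    have e2 : x + P - y = P - (y - x) := by ring
    have e1 : min (P / x * y) (x + P - y) = P - (y - x) := by
      rw [e2]
      apply min_eq_right
      rw [← sub_nonneg]
      have e3 : P / x * y - (P - (y - x)) = (P * (y - x) + x * (y - x)) / x := by
        field_simp; ring
      rw [e3]
      have : 0 ≤ P * (y - x) + x * (y - x) := by nlinarith
      positivity
    rw [e1]
  refine ⟨fun u v => max 0 (u * v - f u * g v), ⟨f, g, hfF, hgF, fun _ _ _ _ => rfl⟩, ?_⟩
  simp only []
  unfold dstarRMM
  have hxIcc : x ∈ Set.Icc (0:ℝ) 1 := ⟨hx, by linarith⟩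
  have hyIcc : y ∈ Set.Icc (0:ℝ) 1 := ⟨by linarith, hy⟩
  split_ifs with h1 h2
  · -- R1
    obtain ⟨h1a, h1b⟩ := h1
    have hx1y : x ≤ 1 - y := le_trans h1b (min_le_right _ _)
    have hPval : P = x * y / (1 - y) := by
      apply min_eq_right
      rw [div_le_iff₀ h1y]; nlinarith
    have hPt : 0 ≤ P - (y - x) := by
      have e3 : x * y / (1 - y) - (y - x) = (x - y * (1 - y)) / (1 - y) := by
        field_simp; ring
      rw [hPval, e3]
      exact div_nonneg (by linarith) (by linarith)
    have hgyv : g y = P - (y - x) := by rw [hgy, max_eq_right hPt]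
    have hCyx : max 0 (y * x - f y * g x) = 0 := by
      rw [hfy, hgx, hPval]
      apply max_eq_left
      have e : (1 - y) * (x * y / (1 - y)) = x * y := by field_simp
      rw [e]
      linarith [mul_comm x y]
    have hCxy : max 0 (x * y - f x * g y) = x / y * (y - x) := by
      rw [hfx, hgyv, hPval]
      have e : x * y - x * (1 - y) / y * (x * y / (1 - y) - (y - x)) = x / y * (y - x) := by
        field_simp
        ring
      rw [e, max_eq_right (mul_nonneg (by positivity) (by linarith))]
    rw [hCxy, hCyx, sub_zero, abs_of_nonneg (mul_nonneg (by positivity) (by linarith))]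
  · -- R2 : 1 - y ≤ x
    have hy2 : 1 / 2 ≤ y := by linarith
    have hPval : P = 1 - x := by
      apply min_eq_left
      rw [le_div_iff₀ h1y]; nlinarith
    have hgyv : g y = 1 - y := by
      rw [hgy, hPval]
      have e : 1 - x - (y - x) = 1 - y := by ring
      rw [e, max_eq_right (by linarith)]
    have hCxy : max 0 (x * y - f x * g y) = x * (2 * y - 1) / y := by
      rw [hfx, hgyv]
      have e : x * y - x * (1 - y) / y * (1 - y) = x * (2 * y - 1) / y := by
        field_simp; ring
      rw [e, max_eq_right (div_nonneg (by nlinarith) hy0.le)]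
    have hCyx : max 0 (y * x - f y * g x) = x * y - (1 - x) * (1 - y) := by
      rw [hfy, hgx, hPval, max_eq_right (by nlinarith)]
      ring
    rw [hCxy, hCyx]
    have e2 : x * (2 * y - 1) / y - (x * y - (1 - x) * (1 - y)) = (1 - y) / y * (y - x) := by
      field_simp; ring
    rw [e2, abs_of_nonneg (mul_nonneg (by positivity) (by linarith))]
  · -- R3 : x < y(1-y)
    push_neg at h2
    have hxy1 : x < y * (1 - y) := by
      by_contra hcon
      push_neg at hcon
      exact h1 ⟨hcon, le_min hxy (by nlinarith)⟩
    have hPval : P = x * y / (1 - y) := by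
      apply min_eq_right
      rw [div_le_iff₀ h1y]; nlinarith
    have hPt : P - (y - x) ≤ 0 := by
      have e : x * y / (1 - y) - (y - x) = (x - y * (1 - y)) / (1 - y) := by
        field_simp; ring
      rw [hPval, e]
      exact div_nonpos_of_nonpos_of_nonneg (by linarith) (by linarith)
    have hgyv : g y = 0 := by rw [hgy, max_eq_left hPt]
    have hCxy : max 0 (x * y - f x * g y) = x * y := by
      rw [hgyv, mul_zero, sub_zero, max_eq_right (by positivity)]
    have hCyx : max 0 (y * x - f y * g x) = 0 := by
      rw [hfy, hgx, hPval]
      apply max_eq_left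
      have e : (1 - y) * (x * y / (1 - y)) = x * y := by field_simp
      rw [e]
      linarith [mul_comm x y]
    rw [hCxy, hCyx, sub_zero, abs_of_nonneg (by positivity)]

lemma key {x y A B P Q : ℝ} (hx : 0 ≤ x) (hxy : x ≤ y) (hy1 : y ≤ 1)
    (hA0 : 0 ≤ A) (hB0 : 0 ≤ B) (hB1 : B ≤ 1 - y) (hf : x * B ≤ y * A)
    (hP0 : 0 ≤ P) (hP1 : P ≤ 1 - x) (hQ0 : 0 ≤ Q) (hg : P + x ≤ Q + y) :
    max 0 (x * y - A * Q) - max 0 (x * y - B * P) ≤ dstarRMM x y := by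
  have hd0 := dstar_nonneg hx hxy hy1
  rcases key_core hx hxy hy1 hA0 hB0 hB1 hf hP0 hP1 hQ0 hg with h | h
  · have h2 : max 0 (x * y - A * Q) ≤ dstarRMM x y := max_le hd0 h
    linarith [le_max_left 0 (x * y - B * P)]
  · rcases le_or_gt (x * y - A * Q) 0 with h0 | h0
    · rw [max_eq_left h0]
      linarith [le_max_left 0 (x * y - B * P)]
    · rw [max_eq_right h0.le]
      linarith [le_max_right 0 (x * y - B * P)]

lemma memF_facts {f : ℝ → ℝ} (hf : MemF f) {x y : ℝ} (hx : 0 ≤ x) (hxy : x ≤ y)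
    (hy : y ≤ 1) :
    0 ≤ f x ∧ f x ≤ 1 - x ∧ 0 ≤ f y ∧ f y ≤ 1 - y ∧ x * f y ≤ y * f x ∧
      f x + x ≤ f y + y := by
  obtain ⟨hrange, h0, h1, hmono, hanti⟩ := hf
  have hxI : x ∈ Set.Icc (0:ℝ) 1 := ⟨hx, hxy.trans hy⟩
  have hyI : y ∈ Set.Icc (0:ℝ) 1 := ⟨hx.trans hxy, hy⟩
  have h1I : (1:ℝ) ∈ Set.Icc (0:ℝ) 1 := ⟨zero_le_one, le_rfl⟩
  have hfx0 : 0 ≤ f x := (hrange x hxI).1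
  have hfy0 : 0 ≤ f y := (hrange y hyI).1
  have hfx1 : f x ≤ 1 - x := by
    have := hmono hxI h1I (hxy.trans hy)
    simp only [h1] at this
    linarith
  have hfy1 : f y ≤ 1 - y := by
    have := hmono hyI h1I hy
    simp only [h1] at this
    linarith
  have hcross : x * f y ≤ y * f x := by
    rcases eq_or_lt_of_le hx with hx0 | hx0
    · have : x * f y = 0 := by rw [← hx0]; ring
      rw [this]
      exact mul_nonneg (hx.trans hxy) hfx0
    · have hy0 : 0 < y := lt_of_lt_of_le hx0 hxy
      have := hanti ⟨hx0, hxy.trans hy⟩ ⟨hy0, hy⟩ hxy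
      rw [div_le_div_iff₀ hy0 hx0] at this
      linarith [this]
  exact ⟨hfx0, hfx1, hfy0, hfy1, hcross, hmono hxI hyI hxy⟩

lemma rmm_le {C : ℝ → ℝ → ℝ} (hC : IsRMMCopula C) {x y : ℝ} (hx : 0 ≤ x)
    (hxy : x ≤ y) (hy : y ≤ 1) : |C x y - C y x| ≤ dstarRMM x y := by
  obtain ⟨f, g, hf, hg, heq⟩ := hC
  have hxI : x ∈ Set.Icc (0:ℝ) 1 := ⟨hx, hxy.trans hy⟩
  have hyI : y ∈ Set.Icc (0:ℝ) 1 := ⟨hx.trans hxy, hy⟩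
  obtain ⟨hfx0, hfx1, hfy0, hfy1, hfc, hfm⟩ := memF_facts hf hx hxy hy
  obtain ⟨hgx0, hgx1, hgy0, hgy1, hgc, hgm⟩ := memF_facts hg hx hxy hy
  rw [heq x hxI y hyI, heq y hyI x hxI, mul_comm y x]
  rw [abs_sub_le_iff]
  constructor
  · have := key hx hxy hy hfx0 hfy0 hfy1 hfc hgx0 hgx1 hgy0 hgm
    have e1 : f x * g y = f x * g y := rfl
    have e2 : f y * g x = f y * g x := rfl
    -- key : max 0 (x*y - f x * g y) - max 0 (x*y - f y * g x) ≤ dstar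
    convert this using 3 <;> ring
  · have := key hx hxy hy hgx0 hgy0 hgy1 hgc hfx0 hfx1 hfy0 hfm
    -- key with A := g x, Q := f y, B := g y, P := f x
    rw [mul_comm (f y) (g x), mul_comm (f x) (g y)]; exact this

lemma sqrt2_facts : Real.sqrt 2 ^ 2 = 2 ∧ 1.41 < Real.sqrt 2 ∧ Real.sqrt 2 < 1.415 := by
  have hs : Real.sqrt 2 ^ 2 = 2 := Real.sq_sqrt (by norm_num)
  have hs0 : 0 < Real.sqrt 2 := Real.sqrt_pos.2 (by norm_num)
  refine ⟨hs, ?_, ?_⟩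
  · nlinarith
  · nlinarith

lemma dstar_le_bound {x y : ℝ} (hx : 0 ≤ x) (hxy : x ≤ y) (hy : y ≤ 1) :
    dstarRMM x y ≤ 3 - 2 * Real.sqrt 2 := by
  obtain ⟨hs, hsl, hsu⟩ := sqrt2_facts
  set s := Real.sqrt 2 with hsdef
  have hy0' : 0 ≤ y := hx.trans hxy
  have hsy : s ^ 2 * y ^ 2 = 2 * y ^ 2 := by rw [hs]
  unfold dstarRMM
  split_ifs with h1 h2
  · obtain ⟨h1a, h1b⟩ := h1
    have hx1y : x ≤ 1 - y := le_trans h1b (min_le_right _ _)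
    rcases eq_or_lt_of_le hy0' with hy0 | hy0
    · rw [← hy0, div_zero, zero_mul]
      linarith
    · rw [div_mul_eq_mul_div, div_le_iff₀ hy0]
      rcases le_total y (2/3) with hc | hc
      · have hp : 0 ≤ y * ((3 - 2*s) - y/4) :=
          mul_nonneg hy0.le (by linarith)
        nlinarith [sq_nonneg (y - 2*x), hp]
      · have hp : 0 ≤ (1 - y - x) * (2*y - 1 - x) :=
          mul_nonneg (by linarith) (by linarith)
        nlinarith [sq_nonneg (s*y - 1), hp, hsy]
  · have hy0 : 0 < y := by nlinarith
    rw [div_mul_eq_mul_div, div_le_iff₀ hy0]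
    have hp : 0 ≤ (1 - y) * (x - (1 - y)) := mul_nonneg (by linarith) (by linarith)
    nlinarith [sq_nonneg (s*y - 1), hp, hsy]
  · push_neg at h2
    have hxy2 : x < y * (1 - y) := by
      by_contra hcon
      push_neg at hcon
      exact h1 ⟨hcon, le_min hxy h2.le⟩
    have s1 : x * y ≤ (y * (1 - y)) * y :=
      mul_le_mul_of_nonneg_right hxy2.le hy0'
    have s2 : 0 ≤ (3*y - 2)^2 * (3*y + 1) :=
      mul_nonneg (sq_nonneg _) (by linarith)
    nlinarith [s1, s2]

/-- Theorem 6.3: every RMM copula satisfies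
`|C(x,y) − C(y,x)| ≤ 3 − 2√2`, the bound is sharp, and for `x ≤ y` in `[0,1]` the
maximal asymmetry function of the family of RMM copulas is given by `dstarRMM`;
for `x ≥ y` the supremum equals the value at `(y,x)`. -/
theorem rmm_maximal_asymmetry :
    (∀ C : ℝ → ℝ → ℝ, IsRMMCopula C →
      ∀ x ∈ Set.Icc (0:ℝ) 1, ∀ y ∈ Set.Icc (0:ℝ) 1,
        |C x y - C y x| ≤ 3 - 2 * Real.sqrt 2) ∧
    (∃ C : ℝ → ℝ → ℝ, IsRMMCopula C ∧
      ∃ x ∈ Set.Icc (0:ℝ) 1, ∃ y ∈ Set.Icc (0:ℝ) 1,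
        |C x y - C y x| = 3 - 2 * Real.sqrt 2) ∧
    (∀ x ∈ Set.Icc (0:ℝ) 1, ∀ y ∈ Set.Icc (0:ℝ) 1, x ≤ y →
      IsLUB {d : ℝ | ∃ C : ℝ → ℝ → ℝ, IsRMMCopula C ∧ d = |C x y - C y x|}
        (dstarRMM x y)) ∧
    (∀ x ∈ Set.Icc (0:ℝ) 1, ∀ y ∈ Set.Icc (0:ℝ) 1, y ≤ x →
      IsLUB {d : ℝ | ∃ C : ℝ → ℝ → ℝ, IsRMMCopula C ∧ d = |C x y - C y x|}
        (dstarRMM y x)) := by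
  have part3 : ∀ x ∈ Set.Icc (0:ℝ) 1, ∀ y ∈ Set.Icc (0:ℝ) 1, x ≤ y →
      IsLUB {d : ℝ | ∃ C : ℝ → ℝ → ℝ, IsRMMCopula C ∧ d = |C x y - C y x|}
        (dstarRMM x y) := by
    intro x hx y hy hxy
    constructor
    · rintro d ⟨C, hC, rfl⟩
      exact rmm_le hC hx.1 hxy hy.2
    · intro b hb
      obtain ⟨C, hC, hd⟩ := attain x y hx.1 hxy hy.2
      have hmem : dstarRMM x y ∈
          {d : ℝ | ∃ C : ℝ → ℝ → ℝ, IsRMMCopula C ∧ d = |C x y - C y x|} :=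
        ⟨C, hC, hd.symm⟩
      exact hb hmem
  refine ⟨?_, ?_, part3, ?_⟩
  · intro C hC x hx y hy
    rcases le_total x y with h | h
    · exact le_trans (rmm_le hC hx.1 h hy.2) (dstar_le_bound hx.1 h hy.2)
    · rw [abs_sub_comm]
      exact le_trans (rmm_le hC hy.1 h hx.2) (dstar_le_bound hy.1 h hx.2)
  · obtain ⟨hs, hsl, hsu⟩ := sqrt2_facts
    set s := Real.sqrt 2 with hsdef
    have hx0 : (0:ℝ) ≤ 1 - s/2 := by linarith
    have hy1 : s/2 ≤ 1 := by linarith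
    have hxy : 1 - s/2 ≤ s/2 := by linarith
    obtain ⟨C, hC, hd⟩ := attain (1 - s/2) (s/2) hx0 hxy hy1
    refine ⟨C, hC, 1 - s/2, ⟨hx0, by linarith⟩, s/2, ⟨by linarith, hy1⟩, ?_⟩
    rw [hd]
    unfold dstarRMM
    have hcond : s/2 * (1 - s/2) ≤ 1 - s/2 ∧ 1 - s/2 ≤ min (s/2) (1 - s/2) := by
      constructor
      · nlinarith
      · exact le_min hxy le_rfl
    rw [if_pos hcond]
    have hs0 : s ≠ 0 := by positivity
    field_simp
    ring_nf
    nlinarith [hs]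
  · intro x hx y hy hyx
    have h := part3 y hy x hx hyx
    have hset : {d : ℝ | ∃ C : ℝ → ℝ → ℝ, IsRMMCopula C ∧ d = |C x y - C y x|} =
        {d : ℝ | ∃ C : ℝ → ℝ → ℝ, IsRMMCopula C ∧ d = |C y x - C x y|} := by
      ext d
      constructor <;> rintro ⟨C, h1, h2⟩ <;> exact ⟨C, h1, by rw [h2, abs_sub_comm]⟩
    rw [hset]
    exact h
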